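/- Let G = A ∘ B ∘ C be a triple composition of place graphs A: k → n, B: l → k, C: m → l. If u, v ∈ V_B and w ∈ V_G with w an ancestor of u and a descendant of v under the transitive closure of the parent map of G (i.e., w = prnt_G^+(u) and v = prnt_G^+(w)), then w ∈ V_B. In particular, any entity lying strictly between two entities of B in the ancestry order must itself belong to B. -/

import Mathlib

/-- A concrete place graph `B : m → n` with entity set `V`, `m` sites, `n` regions,
a parent map on entities (`prntE`) and on sites (`prntS`). -/
structure PlaceGraph (α : Type) where
  V : Finset α
  m : ℕ
  n : ℕ
  prntE : α → α ⊕ ℕ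
  prntS : ℕ → α ⊕ ℕ

namespace PlaceGraph

/-- Well-formedness: parents of entities/sites are entities of the graph or regions `< n`. -/
def WF {α : Type} (G : PlaceGraph α) : Prop :=
  (∀ v ∈ G.V, (∀ u, G.prntE v = .inl u → u ∈ G.V) ∧ (∀ j, G.prntE v = .inr j → j < G.n)) ∧
  (∀ s, s < G.m → (∀ u, G.prntS s = .inl u → u ∈ G.V) ∧ (∀ j, G.prntS s = .inr j → j < G.n))

/-- Composition `A ∘ B` of place graphs `A : k → n` and `B : m → k`:
`B`'s regions are identified with `A`'s sites. -/
def comp {α : Type} [DecidableEq α] (A B : PlaceGraph α) : PlaceGraph α where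
  V := A.V ∪ B.V
  m := B.m
  n := A.n
  prntE := fun v =>
    if v ∈ B.V then
      match B.prntE v with
      | .inl u => .inl u
      | .inr j => A.prntS j
    else A.prntE v
  prntS := fun s =>
    match B.prntS s with
    | .inl u => .inl u
    | .inr j => A.prntS j

/-- `step G v u`: the entity `u` is the parent of the entity `v` in `G`. -/
def step {α : Type} (G : PlaceGraph α) (v u : α) : Prop :=
  v ∈ G.V ∧ u ∈ G.V ∧ G.prntE v = .inl u

/-- `Anc G u v`: the entity `u` is a (strict) ancestor of the entity `v` in `G`,
i.e. `u ∈ prnt_G⁺(v)`. -/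
def Anc {α : Type} (G : PlaceGraph α) (u v : α) : Prop :=
  Relation.TransGen (step G) v u

end PlaceGraph

/-- In a triple composition `G = A ∘ B ∘ C` of place graphs
`A : k → n`, `B : l → k`, `C : m → l`, if `u, v ∈ V_B` and `w ∈ V_G` is an ancestor of
`u` and a descendant of `v` (i.e. `w ∈ prnt_G⁺(u)` and `v ∈ prnt_G⁺(w)`), then `w ∈ V_B`. -/
theorem between_inner_entities_mem_middle {α : Type} [DecidableEq α]
    (A B C : PlaceGraph α) (hWA : A.WF) (hWB : B.WF) (hWC : C.WF)
    (hIfaceAB : B.n = A.m) (hIfaceBC : C.n = B.m)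
    (hAB : Disjoint A.V B.V) (hAC : Disjoint A.V C.V) (hBC : Disjoint B.V C.V)
    (u v w : α) (hu : u ∈ B.V) (hv : v ∈ B.V) (hw : w ∈ (A.comp (B.comp C)).V)
    (h₁ : PlaceGraph.Anc (A.comp (B.comp C)) w u)
    (h₂ : PlaceGraph.Anc (A.comp (B.comp C)) v w) :
    w ∈ B.V := by
  set G := A.comp (B.comp C) with hG
  -- Step lemma 1: parent of an entity in A ∪ B is in A ∪ B
  have up : ∀ x y, PlaceGraph.step G x y → x ∈ A.V ∪ B.V → y ∈ A.V ∪ B.V := by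
    rintro x y ⟨hx, hy, hp⟩ hxAB
    rcases Finset.mem_union.1 hxAB with hxA | hxB
    · have hxnB : x ∉ B.V := fun h => (hAB.forall_ne_finset hxA h) rfl
      have hxnC : x ∉ C.V := fun h => (hAC.forall_ne_finset hxA h) rfl
      have hxnBC : x ∉ B.V ∪ C.V := by
        simp [hxnB, hxnC]
      simp only [hG, PlaceGraph.comp] at hp
      simp only [hxnBC, if_false] at hp
      exact Finset.mem_union_left _ ((hWA.1 x hxA).1 y hp)
    · have hxnC : x ∉ C.V := fun h => (hBC.forall_ne_finset hxB h) rfl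
      have hxBC : x ∈ B.V ∪ C.V := Finset.mem_union_left _ hxB
      simp only [hG, PlaceGraph.comp] at hp
      simp only [hxBC, hxnC, if_true, if_false] at hp
      rcases hpB : B.prntE x with u' | j
      · rw [hpB] at hp
        simp only [Sum.inl.injEq] at hp
        exact Finset.mem_union_right _ (hp ▸ (hWB.1 x hxB).1 u' hpB)
      · rw [hpB] at hp
        simp only [] at hp
        have hj : j < A.m := hIfaceAB ▸ (hWB.1 x hxB).2 j hpB
        exact Finset.mem_union_left _ ((hWA.2 j hj).1 y hp)
  -- Step lemma 2: child of an entity in B ∪ C is in B ∪ C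
  have down : ∀ x y, PlaceGraph.step G x y → y ∈ B.V ∪ C.V → x ∈ B.V ∪ C.V := by
    rintro x y ⟨hx, hy, hp⟩ hyBC
    by_contra hxn
    have hxA : x ∈ A.V := by
      simp only [hG, PlaceGraph.comp, Finset.mem_union] at hx
      simp only [Finset.mem_union] at hxn
      tauto
    simp only [hG, PlaceGraph.comp] at hp
    simp only [hxn, if_false] at hp
    have hyA : y ∈ A.V := (hWA.1 x hxA).1 y hp
    rcases Finset.mem_union.1 hyBC with h | h
    · exact (hAB.forall_ne_finset hyA h) rfl
    · exact (hAC.forall_ne_finset hyA h) rfl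
  -- w is an ancestor of u ∈ A ∪ B, hence w ∈ A ∪ B
  have hwAB : ∀ z, Relation.TransGen (PlaceGraph.step G) u z → z ∈ A.V ∪ B.V := by
    intro z h
    induction h with
    | single h => exact up _ _ h (Finset.mem_union_right _ hu)
    | tail _ h ih => exact up _ _ h ih
  -- w is a descendant of v ∈ B ∪ C, hence w ∈ B ∪ C
  have hwBC : ∀ z, Relation.TransGen (PlaceGraph.step G) z v → z ∈ B.V ∪ C.V := by
    intro z h
    induction h using Relation.TransGen.head_induction_on with
    | single h => exact down _ _ h (Finset.mem_union_left _ hv)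
    | head h _ ih => exact down _ _ h ih
  rcases Finset.mem_union.1 (hwAB w h₁) with h | h
  · rcases Finset.mem_union.1 (hwBC w h₂) with h' | h'
    · exact h'
    · exact absurd rfl (hAC.forall_ne_finset h h')
  · exact h
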